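/- Let (aᵢ) be a sequence of reals with Σᵢ|aᵢ| < ∞, |aᵢ| > 0 for all i, and (log|aᵢ|)/(i·log i) → −∞. Setting Rₙ = Σ_{i≥n}|aᵢ|, one has (log Rₙ)/(n·log n) → −∞ as n → ∞. -/
import Mathlib

open Filter Real

theorem tail_log_tendsto_atBot (a : ℕ → ℝ) (hsum : Summable (fun i => |a i|))
    (hpos : ∀ i, 0 < |a i|)
    (hfast : Filter.Tendsto (fun i : ℕ => Real.log |a i| / (i * Real.log i))
      Filter.atTop Filter.atBot) :
    Filter.Tendsto (fun n : ℕ => Real.log (∑' i : ℕ, |a (n + i)|) / (n * Real.log n))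
      Filter.atTop Filter.atBot := by
  rw [Filter.tendsto_atBot]
  intro b
  set C : ℝ := max 1 (-b) with hCdef
  have hC1 : 1 ≤ C := le_max_left _ _
  have hCb : -C ≤ b := by
    have := le_max_right 1 (-b); linarith
  have h1 : ∀ᶠ i in atTop, Real.log |a i| / (i * Real.log i) ≤ -(2*C+1) :=
    hfast.eventually (eventually_le_atBot _)
  obtain ⟨N₀, hN₀⟩ := Filter.eventually_atTop.mp h1
  have hexp3 : Real.exp 1 ≤ 3 := by
    have := Real.exp_one_lt_d9; linarith
  filter_upwards [Filter.eventually_ge_atTop (max N₀ 3)] with n hn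
  have hnN₀ : N₀ ≤ n := le_trans (le_max_left _ _) hn
  have hn3 : 3 ≤ n := le_trans (le_max_right _ _) hn
  have hn3' : (3:ℝ) ≤ (n:ℝ) := by exact_mod_cast hn3
  have hlogn : 1 ≤ Real.log n :=
    (Real.le_log_iff_exp_le (by linarith)).mpr (le_trans hexp3 hn3')
  set s : ℝ := (n:ℝ) * Real.log n with hsdef
  have hs3 : 3 ≤ s := by nlinarith
  have hs0 : 0 < s := by linarith
  -- termwise bound
  have key : ∀ i : ℕ, |a (n + i)| ≤ Real.exp (-(2*C)*s) * Real.exp (-(i:ℝ)) := by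
    intro i
    have hmN₀ : N₀ ≤ n + i := le_trans hnN₀ (Nat.le_add_right n i)
    have h := hN₀ (n + i) hmN₀
    have hm3 : (3:ℝ) ≤ ((n+i:ℕ):ℝ) := by
      have : 3 ≤ n + i := le_trans hn3 (Nat.le_add_right n i)
      exact_mod_cast this
    have hlogm : 1 ≤ Real.log ((n+i:ℕ):ℝ) :=
      (Real.le_log_iff_exp_le (by linarith)).mpr (le_trans hexp3 hm3)
    have hms : (0:ℝ) < ((n+i:ℕ):ℝ) * Real.log ((n+i:ℕ):ℝ) := by nlinarith
    rw [div_le_iff₀ hms] at h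
    have hnm : (n:ℝ) ≤ ((n+i:ℕ):ℝ) := by exact_mod_cast Nat.le_add_right n i
    have hlnm : Real.log (n:ℝ) ≤ Real.log ((n+i:ℕ):ℝ) :=
      Real.log_le_log (by linarith) hnm
    have h1' : s ≤ ((n+i:ℕ):ℝ) * Real.log ((n+i:ℕ):ℝ) :=
      mul_le_mul hnm hlnm (by linarith) (by linarith)
    have h2' : (i:ℝ) ≤ ((n+i:ℕ):ℝ) * Real.log ((n+i:ℕ):ℝ) := by
      have : (i:ℝ) ≤ ((n+i:ℕ):ℝ) := by exact_mod_cast Nat.le_add_left i n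
      nlinarith
    calc |a (n + i)| = Real.exp (Real.log |a (n+i)|) := (Real.exp_log (hpos _)).symm
      _ ≤ Real.exp (-(2*C)*s + -(i:ℝ)) := by
          apply Real.exp_le_exp.mpr
          nlinarith [mul_le_mul_of_nonneg_left h1' (by linarith : (0:ℝ) ≤ 2*C)]
      _ = Real.exp (-(2*C)*s) * Real.exp (-(i:ℝ)) := Real.exp_add _ _
  -- summabilities
  have hgeofun : ∀ i : ℕ, Real.exp (-(i:ℝ)) = (Real.exp (-1))^i := by
    intro i
    rw [← Real.exp_nat_mul]
    ring_nf
  have hgeosum : Summable (fun i : ℕ => (Real.exp (-1))^i) :=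
    summable_geometric_of_lt_one (Real.exp_pos _).le
      (Real.exp_lt_one_iff.mpr (by norm_num))
  have hgeo : Summable (fun i : ℕ => Real.exp (-(2*C)*s) * Real.exp (-(i:ℝ))) := by
    simp only [hgeofun]; exact hgeosum.mul_left _
  have hsum_n : Summable (fun i : ℕ => |a (n + i)|) := by
    have := (summable_nat_add_iff n).mpr hsum
    simpa [add_comm] using this
  set R : ℝ := ∑' i : ℕ, |a (n + i)| with hRdef
  have hR0 : 0 < R := Summable.tsum_pos hsum_n (fun i => (hpos _).le) 0 (hpos _)
  have hRle : R ≤ Real.exp (-(2*C)*s) * (1 - Real.exp (-1))⁻¹ := by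
    have h := Summable.tsum_le_tsum key hsum_n hgeo
    simp only [hgeofun] at h
    rwa [tsum_mul_left, tsum_geometric_of_lt_one (Real.exp_pos _).le
        (Real.exp_lt_one_iff.mpr (by norm_num))] at h
  have hexp2 : (2:ℝ) ≤ Real.exp 1 := by
    have := Real.add_one_le_exp 1; linarith
  have hinv2 : (1 - Real.exp (-1))⁻¹ ≤ 2 := by
    have he : Real.exp (-1) ≤ 1/2 := by
      rw [Real.exp_neg]
      rw [inv_le_comm₀ (Real.exp_pos 1) (by norm_num)]
      linarith
    rw [inv_le_comm₀ (by linarith) (by norm_num)]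
    linarith
  have hRle2 : R ≤ Real.exp (-(2*C)*s) * 2 :=
    le_trans hRle (mul_le_mul_of_nonneg_left hinv2 (Real.exp_pos _).le)
  have hlog2 : Real.log 2 < 1 := by
    have := Real.log_two_lt_d9; linarith
  have hlogR : Real.log R ≤ -C * s := by
    have h := Real.log_le_log hR0 hRle2
    rw [Real.log_mul (Real.exp_pos _).ne' (by norm_num), Real.log_exp] at h
    nlinarith
  show Real.log R / ((n:ℝ) * Real.log n) ≤ b
  rw [div_le_iff₀ hs0]
  calc Real.log R ≤ -C * s := hlogR
    _ ≤ b * s := mul_le_mul_of_nonneg_right hCb hs0.le
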